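/- In the proof of the tree characterization of ≈ on K_1: if the tree T = {σ : s·σ ≄ t·σ} is well-founded, and α_σ denotes the ordinal position of σ ∈ T in the Kleene–Brouwer well-order of T, then s·σ ∼_{α_σ + 1} t·σ for every σ ∈ T. In particular s ∼_α t where α is the order type of (T, <_KB). -/

import Mathlib

/-- A partial applicative structure: a set with a partial binary application. -/
structure PAS where
  carrier : Type
  app : carrier → carrier → Part carrier

namespace PAS

/-- Closed terms over a partial applicative structure. -/
inductive Term (A : PAS) : Type
  | const : A.carrier → Term A
  | app : Term A → Term A → Term A

/-- Evaluation of a closed term (a partial element of the carrier). -/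
def Term.eval {A : PAS} : Term A → Part A.carrier
  | .const a => Part.some a
  | .app s t => do
      let x ← Term.eval s
      let y ← Term.eval t
      A.app x y

/-- Kleene equality of closed terms: both undefined, or both defined and equal. -/
def KEq {A : PAS} (s t : Term A) : Prop := s.eval = t.eval

/-- The transfinite hierarchy of extensionality relations `∼_α` on closed terms:
`s ∼_0 t` iff `s ≃ t`; `s ∼_{α+1} t` iff `∀ x, s·x ∼_α t·x`; and at limits,
`s ∼_α t` iff `s ∼_β t` for some `β < α`. -/
noncomputable def sim (A : PAS) (α : Ordinal) : Term A → Term A → Prop :=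
  Ordinal.limitRecOn α
    (fun s t => KEq s t)
    (fun _ ih s t => ∀ x : A.carrier, ih (s.app (.const x)) (t.app (.const x)))
    (fun β _ ih s t => ∃ γ, ∃ h : γ < β, ih γ h s t)

end PAS

/-- A partial combinatory algebra: a partial applicative structure with
combinators `K` and `S` such that `K·a·b = a`, `S·a·b` is defined, and
`S·a·b·c ≃ a·c·(b·c)`. -/
structure PCA extends PAS where
  K : carrier
  S : carrier
  K_spec : ∀ a b : carrier, (app K a).bind (fun x => app x b) = Part.some a
  S_defined : ∀ a b : carrier, ((app S a).bind (fun x => app x b)).Dom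
  S_spec : ∀ a b c : carrier,
    ((app S a).bind (fun x => app x b)).bind (fun x => app x c)
      = (app a c).bind (fun u => (app b c).bind (fun v => app u v))

/-- Kleene's first model: the pca on ω with application n·m = Φ_n(m). -/
def K1 : PAS :=
  ⟨ℕ, fun n m => (Denumerable.ofNat Nat.Partrec.Code n).eval m⟩

/-- Iterated application of a term to a finite list of elements: t·σ(0)·…·σ(k-1). -/
def PAS.Term.appList {A : PAS} (t : PAS.Term A) (σ : List A.carrier) : PAS.Term A :=
  σ.foldl (fun s x => s.app (.const x)) t

/-- An element is hereditarily total if every iterated application to elements is defined. -/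
def PAS.HeredTotal (A : PAS) (a : A.carrier) : Prop :=
  ∀ σ : List A.carrier, ((PAS.Term.const a).appList σ).eval.Dom

/-- The Kleene–Brouwer ordering on finite strings: τ <KB σ iff τ properly extends σ,
or τ is to the left of σ at the first point of difference. -/
def KBlt (τ σ : List ℕ) : Prop :=
  (σ <+: τ ∧ σ ≠ τ) ∨
    ∃ n : ℕ, n < τ.length ∧ n < σ.length ∧ τ.take n = σ.take n ∧ τ.getD n 0 < σ.getD n 0


lemma sim_zero {A : PAS} (s t : A.Term) : A.sim 0 s t ↔ PAS.KEq s t := by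
  simp [PAS.sim, Ordinal.limitRecOn_zero]

lemma sim_succ {A : PAS} (α : Ordinal) (s t : A.Term) :
    A.sim (α + 1) s t ↔ ∀ x : A.carrier, A.sim α (s.app (.const x)) (t.app (.const x)) := by
  rw [PAS.sim, Ordinal.add_one_eq_succ, Ordinal.limitRecOn_succ]
  rfl

lemma sim_limit {A : PAS} {α : Ordinal} (hα : Order.IsSuccLimit α) (s t : A.Term) :
    A.sim α s t ↔ ∃ γ, ∃ _ : γ < α, A.sim γ s t := by
  rw [PAS.sim, Ordinal.limitRecOn_limit _ _ _ _ hα]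
  rfl

lemma KEq_app {A : PAS} {s t : A.Term} (h : PAS.KEq s t) (c : A.Term) :
    PAS.KEq (s.app c) (t.app c) := by
  unfold PAS.KEq at *
  show (s.app c).eval = (t.app c).eval
  simp only [PAS.Term.eval, h]

lemma sim_app {A : PAS} (α : Ordinal) : ∀ {s t : A.Term}, A.sim α s t →
    ∀ x : A.carrier, A.sim α (s.app (.const x)) (t.app (.const x)) := by
  induction α using Ordinal.limitRecOn with
  | zero => intro s t h x; rw [sim_zero] at *; exact KEq_app h _
  | add_one α ih =>
      intro s t h x
      simp only [← Ordinal.add_one_eq_succ, sim_succ] at h ⊢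
      exact fun y => ih (h x) y
  | limit α hα ih =>
      intro s t h x
      rw [sim_limit hα] at h ⊢
      obtain ⟨γ, hγ, hsim⟩ := h
      exact ⟨γ, hγ, ih γ hγ hsim x⟩

lemma KEq_sim {A : PAS} (α : Ordinal) : ∀ {s t : A.Term}, PAS.KEq s t → A.sim α s t := by
  induction α using Ordinal.limitRecOn with
  | zero => intro s t h; rw [sim_zero]; exact h
  | add_one α ih =>
      intro s t h
      simp only [← Ordinal.add_one_eq_succ, sim_succ]
      intro x
      exact ih (KEq_app h _)
  | limit α hα ih =>
      intro s t h
      rw [sim_limit hα]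
      exact ⟨0, hα.pos, ih 0 hα.pos h⟩

lemma sim_mono {A : PAS} (α : Ordinal) : ∀ {β : Ordinal}, β ≤ α → ∀ {s t : A.Term},
    A.sim β s t → A.sim α s t := by
  induction α using Ordinal.limitRecOn with
  | zero => intro β hβ s t h; rwa [nonpos_iff_eq_zero.mp hβ] at h
  | add_one α ih =>
      intro β hβ s t h
      rcases eq_or_lt_of_le hβ with rfl | hlt
      · exact h
      · rw [Order.lt_add_one_iff] at hlt
        simp only [← Ordinal.add_one_eq_succ, sim_succ]
        exact sim_app α (ih hlt h)
  | limit α hα ih =>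
      intro β hβ s t h
      rcases eq_or_lt_of_le hβ with rfl | hlt
      · exact h
      · rw [sim_limit hα]
        exact ⟨β, hlt, h⟩

lemma appList_concat {A : PAS} (s : A.Term) (σ : List A.carrier) (x : A.carrier) :
    s.appList (σ ++ [x]) = (s.appList σ).app (.const x) := by
  simp [PAS.Term.appList]

/-- If the tree T = {σ : s·σ ≄ t·σ} is well-ordered by the Kleene–Brouwer
order (i.e. well-founded), and α_σ is the ordinal position of σ ∈ T in this well-order,
then s·σ ∼_{α_σ + 1} t·σ for every σ ∈ T; in particular s ∼_α t where α is the order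
type of (T, <KB). -/
theorem stmt10 (s t : K1.Term)
    (hwo : IsWellOrder {σ : List ℕ // ¬ PAS.KEq (s.appList σ) (t.appList σ)}
      (fun τ σ => KBlt τ.1 σ.1)) :
    (∀ (σ : List ℕ) (h : ¬ PAS.KEq (s.appList σ) (t.appList σ)),
      K1.sim ((@Ordinal.typein {σ : List ℕ // ¬ PAS.KEq (s.appList σ) (t.appList σ)} (fun τ σ => KBlt τ.1 σ.1) hwo) ⟨σ, h⟩ + 1)
        (s.appList σ) (t.appList σ)) ∧
    K1.sim (@Ordinal.type {σ : List ℕ // ¬ PAS.KEq (s.appList σ) (t.appList σ)} (fun τ σ => KBlt τ.1 σ.1) hwo) s t := by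
  set r : {σ : List ℕ // ¬ PAS.KEq (s.appList σ) (t.appList σ)} →
      {σ : List ℕ // ¬ PAS.KEq (s.appList σ) (t.appList σ)} → Prop :=
    fun τ σ => KBlt τ.1 σ.1 with hr
  have main : ∀ p : {σ : List ℕ // ¬ PAS.KEq (s.appList σ) (t.appList σ)},
      K1.sim (@Ordinal.typein _ r hwo p + 1) (s.appList p.1) (t.appList p.1) := by
    intro p
    induction p using hwo.toIsWellFounded.wf.induction with
    | _ p ih =>
      rw [sim_succ]
      intro x
      by_cases hx : PAS.KEq (s.appList (p.1 ++ ([x] : List ℕ))) (t.appList (p.1 ++ ([x] : List ℕ)))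
      · erw [appList_concat, appList_concat] at hx
        exact KEq_sim _ hx
      · have hlt : r ⟨p.1 ++ ([x] : List ℕ), hx⟩ p := by
          refine Or.inl ⟨⟨[x], rfl⟩, ?_⟩
          intro hcontra
          exact absurd (congrArg List.length hcontra) (by simp)
        have h1 := ih _ hlt
        erw [appList_concat, appList_concat] at h1
        refine sim_mono _ ?_ h1
        rw [Ordinal.add_one_eq_succ, Order.succ_le_iff]
        exact (Ordinal.typein_lt_typein r).mpr hlt
  constructor
  · intro σ h
    exact main ⟨σ, h⟩
  · by_cases h : PAS.KEq (s.appList []) (t.appList [])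
    · exact KEq_sim _ h
    · have h1 := main ⟨[], h⟩
      have h2 : K1.sim (@Ordinal.typein _ r hwo ⟨[], h⟩ + 1) s t := h1
      refine sim_mono _ ?_ h2
      rw [Ordinal.add_one_eq_succ, Order.succ_le_iff]
      exact Ordinal.typein_lt_type r _
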